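/- Let m be a square-free positive integer with m ≡ 2 or 3 (mod 4), let θ = m^(1/4) be the real positive fourth root of m, and let K = ℚ(i, θ). Then K has degree 8 over ℚ; equivalently, the polynomial x⁴ − m is irreducible over ℚ(i). -/

import Mathlib

open NumberField

/-- The real positive fourth root of `m`, viewed as a complex number. -/
noncomputable def theta (m : ℕ) : ℂ := ((m : ℝ) ^ ((1 : ℝ) / 4) : ℝ)

/-- The octic field `K = ℚ(i, m^(1/4))` as a subfield of `ℂ`. -/
noncomputable def Kfield (m : ℕ) : IntermediateField ℚ ℂ :=
  IntermediateField.adjoin ℚ {Complex.I, theta m}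

open Polynomial IntermediateField

set_option maxHeartbeats 1000000
set_option synthInstance.maxHeartbeats 200000

lemma theta_pow_four (m : ℕ) : (theta m) ^ 4 = (m : ℂ) := by
  rw [theta]
  norm_cast
  rw [← Real.rpow_natCast ((m:ℝ) ^ ((1:ℝ)/4)) 4, ← Real.rpow_mul (by positivity)]
  norm_num

lemma irr_int (m : ℕ) (hm : Squarefree m) (h2 : 2 ≤ m) :
    Irreducible ((X ^ 4 - C (m : ℤ)) : ℤ[X]) := by
  obtain ⟨p, hp, hpd⟩ := Nat.exists_prime_and_dvd (by omega : m ≠ 1)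
  have hpZ : Prime (p : ℤ) := Nat.prime_iff_prime_int.mp hp
  apply Polynomial.irreducible_of_eisenstein_criterion
    (Ideal.span_singleton_prime hpZ.ne_zero |>.mpr hpZ)
  · rw [(monic_X_pow_sub_C (m:ℤ) (by norm_num)).leadingCoeff,
      Ideal.mem_span_singleton]
    exact fun h => hpZ.not_unit (isUnit_of_dvd_one h)
  · intro n hn
    rw [degree_X_pow_sub_C (by norm_num)] at hn
    have hn4 : n < 4 := by exact_mod_cast hn
    rw [coeff_sub, coeff_X_pow, coeff_C]
    interval_cases n <;>
      simp [Ideal.mem_span_singleton, Int.natCast_dvd_natCast.mpr hpd]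
  · rw [degree_X_pow_sub_C (by norm_num)]; norm_num
  · rw [coeff_sub, coeff_X_pow, coeff_C, Ideal.span_singleton_pow,
      Ideal.mem_span_singleton]
    simp only [if_neg (by norm_num : ¬ (0 = 4)), if_pos rfl, zero_sub, dvd_neg]
    intro h
    have : (p : ℤ) * p ∣ m := by rwa [← sq]
    have : (p * p : ℕ) ∣ m := by exact_mod_cast this
    exact hp.not_isUnit (hm p this)
  · exact (monic_X_pow_sub_C (m:ℤ) (by norm_num)).isPrimitive

lemma irr_rat (m : ℕ) (hm : Squarefree m) (h2 : 2 ≤ m) :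
    Irreducible ((X ^ 4 - C (m : ℚ)) : ℚ[X]) := by
  have h := (Polynomial.IsPrimitive.Int.irreducible_iff_irreducible_map_cast
    ((monic_X_pow_sub_C (m:ℤ) (by norm_num)).isPrimitive)).mp (irr_int m hm h2)
  rwa [Polynomial.map_sub, Polynomial.map_pow, map_X, map_C] at h
    -- map_C gives C ((m:ℤ):ℚ) = C (m:ℚ)?

lemma minpoly_theta (m : ℕ) (hm : Squarefree m) (h2 : 2 ≤ m) :
    minpoly ℚ (theta m) = X ^ 4 - C (m : ℚ) := by
  refine (minpoly.eq_of_irreducible_of_monic (irr_rat m hm h2) ?_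
    (monic_X_pow_sub_C _ (by norm_num))).symm
  simp [theta_pow_four]

noncomputable def Rfield : IntermediateField ℚ ℂ :=
  Subfield.toIntermediateField Complex.ofRealHom.fieldRange
    (fun x => ⟨x, by simp⟩)

lemma mem_Rfield_iff (z : ℂ) : z ∈ Rfield ↔ ∃ r : ℝ, (r : ℂ) = z := Iff.rfl

/-- For squarefree `m ≡ 2, 3 (mod 4)`, the field `ℚ(i, m^(1/4))` has degree 8 over `ℚ`. -/
theorem stmt_8 (m : ℕ) (hm : Squarefree m) (hpos : 0 < m)
    (h23 : m % 4 = 2 ∨ m % 4 = 3) :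
    Module.finrank ℚ (Kfield m) = 8 := by
  have h2 : 2 ≤ m := by omega
  set F : IntermediateField ℚ ℂ := IntermediateField.adjoin ℚ {theta m} with hF
  have hint : IsIntegral ℚ (theta m) :=
    ⟨X ^ 4 - C (m : ℚ), monic_X_pow_sub_C _ (by norm_num), by simp [theta_pow_four]⟩
  have hFrank : Module.finrank ℚ F = 4 := by
    rw [hF, IntermediateField.adjoin.finrank hint, minpoly_theta m hm h2,
      natDegree_X_pow_sub_C]
  -- F is contained in the reals
  have hFR : F ≤ Rfield := by
    rw [hF, IntermediateField.adjoin_le_iff]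
    rintro z rfl
    exact ⟨_, rfl⟩
  -- no square root of -1 in F
  have hsq : ∀ b : F, b ^ 2 ≠ -1 := by
    rintro b hb
    obtain ⟨r, hr⟩ := hFR b.2
    have hbc : ((b : ℂ)) ^ 2 = -1 := by
      have := congrArg (fun x : F => (x : ℂ)) hb
      push_cast at this
      exact_mod_cast this
    rw [← hr] at hbc
    rw [Complex.ofRealHom_eq_coe] at hbc
    have : (r : ℝ) ^ 2 = -1 := by exact_mod_cast hbc
    have : (r : ℝ) ^ 2 = -1 := by exact_mod_cast this
    nlinarith [sq_nonneg r]
  clear_value F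
  have hIint : IsIntegral F Complex.I :=
    ⟨X ^ 2 - C (-1 : F), monic_X_pow_sub_C _ (by norm_num), by simp⟩
  have hirr : Irreducible ((X ^ 2 - C (-1 : F)) : F[X]) :=
    X_pow_sub_C_irreducible_of_prime Nat.prime_two hsq
  have hminI : minpoly F Complex.I = X ^ 2 - C (-1 : F) := by
    refine (minpoly.eq_of_irreducible_of_monic hirr ?_
      (monic_X_pow_sub_C _ (by norm_num))).symm
    simp
  have hErank : Module.finrank F F⟮Complex.I⟯ = 2 := by
    rw [IntermediateField.adjoin.finrank hIint, hminI, natDegree_X_pow_sub_C]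
  have hK : Kfield m = (IntermediateField.adjoin F {Complex.I}).restrictScalars ℚ := by
    rw [Kfield, hF]
    refine Eq.trans ?_ (IntermediateField.adjoin_adjoin_left (F := ℚ) (S := {theta m}) (T := {Complex.I})).symm
    rw [Set.union_comm]
    rfl
  have : Module.finrank ℚ ((IntermediateField.adjoin F {Complex.I}).restrictScalars ℚ)
      = Module.finrank ℚ F⟮Complex.I⟯ := rfl
  rw [hK, this, ← Module.finrank_mul_finrank ℚ F F⟮Complex.I⟯, hFrank, hErank]
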